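/- Let G be a finite group with n elements and let d ≥ 2. Define Q : (Fin d → G) → G by Q x = x 0 * x 1 * ⋯ * x (d−1) (the ordered product). Then Q is a d-dimensional latin hypercube on the symbol set G, and the number of cuboctahedra of Q is exactly n^(3d−1). -/

import Mathlib

/-- A `d`-dimensional latin hypercube on a symbol set `S`: in each line all symbols
are distinct. -/
def IsLatinHypercubeOn {d : ℕ} {S : Type*} (Q : (Fin d → S) → S) : Prop :=
  ∀ (i : Fin d) (x : Fin d → S),
    Function.Bijective (fun v : S => Q (Function.update x i v))

/-- `(A, B)` is a cuboctahedron of the hypercube `Q` on the symbol set `S`. -/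
def IsCuboctOn {d : ℕ} {S : Type*} (Q : (Fin d → S) → S)
    (A B : Fin d → S × S) : Prop :=
  ∀ j : Fin d → Fin 2,
    Q (fun i => if j i = 0 then (A i).1 else (A i).2) =
    Q (fun i => if j i = 0 then (B i).1 else (B i).2)

/-- The number of cuboctahedra of the hypercube `Q` on the symbol set `S`. -/
noncomputable def cuboctCountOn {d : ℕ} {S : Type*} (Q : (Fin d → S) → S) : ℕ :=
  Set.ncard {p : (Fin d → S × S) × (Fin d → S × S) | IsCuboctOn Q p.1 p.2}

section Aux
variable {G : Type*} [Group G]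

lemma ofFn_update' {d : ℕ} {α : Type*} (g : Fin d → α) (i : Fin d) (v : α) :
    List.ofFn (Function.update g i v) = (List.ofFn g).set i v := by
  apply List.ext_getElem
  · simp
  · intro k h1 h2
    simp only [List.getElem_ofFn, List.getElem_set, List.length_ofFn] at *
    rcases eq_or_ne k i.val with h | h
    · simp [h, Function.update, Fin.ext_iff]
    · rw [if_neg (fun hh => h hh.symm)]
      exact Function.update_of_ne (by simp [Fin.ext_iff]; omega) _ _

lemma prod_ofFn_update' {d : ℕ} (g : Fin d → G) (i : Fin d) (v : G) :
    (List.ofFn (Function.update g i v)).prod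
      = ((List.ofFn g).take i).prod * v * ((List.ofFn g).drop (i+1)).prod := by
  rw [ofFn_update', List.prod_set]
  simp [i.isLt]

lemma telescope' : ∀ (d : ℕ) (s : Fin d → G) (c : Fin (d+1) → G),
    (List.ofFn (fun i : Fin d => c i.castSucc * s i * (c i.succ)⁻¹)).prod
      = c 0 * (List.ofFn s).prod * (c (Fin.last d))⁻¹
  | 0, s, c => by simp [Fin.last]
  | (d+1), s, c => by
    rw [List.ofFn_succ, List.ofFn_succ (f := s), List.prod_cons, List.prod_cons]
    have IH := telescope' d (fun i => s i.succ) (fun i => c i.succ)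
    simp only [← Fin.succ_castSucc]
    rw [IH, Fin.castSucc_zero, Fin.succ_last]
    have h1 : c (Fin.succ 0) = c (0 : Fin (d+1)).succ := rfl
    rw [h1]
    group

def embC (d : ℕ) (c' : Fin (d-1) → G) : Fin (d+1) → G :=
  fun k => if h : 0 < k.val ∧ k.val < d then c' ⟨k.val - 1, by omega⟩ else 1

def PhiC (d : ℕ) (p : (Fin d → G × G) × (Fin (d-1) → G)) :
    (Fin d → G × G) × (Fin d → G × G) :=
  (p.1, fun i =>
    (embC d p.2 i.castSucc * (p.1 i).1 * (embC d p.2 i.succ)⁻¹,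
     embC d p.2 i.castSucc * (p.1 i).2 * (embC d p.2 i.succ)⁻¹))

lemma embC_zero (d : ℕ) (c' : Fin (d-1) → G) : embC d c' 0 = 1 := by
  simp [embC]

lemma embC_last (d : ℕ) (c' : Fin (d-1) → G) : embC d c' (Fin.last d) = 1 := by
  simp [embC]

def cdef (d : ℕ) (A B : Fin d → G × G) : Fin (d+1) → G :=
  fun k => (((List.ofFn fun t => (B t).1).take k).prod)⁻¹ *
    ((List.ofFn fun t => (A t).1).take k).prod

lemma PhiC_injective (d : ℕ) : Function.Injective (PhiC (G := G) d) := by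
  rintro ⟨A, c1⟩ ⟨A2, c2⟩ h
  have hA : A = A2 := congrArg Prod.fst h
  subst hA
  have hB := congrArg Prod.snd h
  simp only [PhiC] at hB
  -- show embedded functions agree by induction
  have key : ∀ k : ℕ, ∀ hk : k < d + 1, embC d c1 ⟨k, hk⟩ = embC d c2 ⟨k, hk⟩ := by
    intro k
    induction k with
    | zero => intro hk; rw [show (⟨0, hk⟩ : Fin (d+1)) = 0 from rfl, embC_zero, embC_zero]
    | succ m ih =>
      intro hk
      have hm : m < d := by omega
      have hi := congrFun hB ⟨m, hm⟩
      have h1 := congrArg Prod.fst hi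
      simp only at h1
      have hcast : (⟨m, hm⟩ : Fin d).castSucc = ⟨m, by omega⟩ := rfl
      have hsucc : (⟨m, hm⟩ : Fin d).succ = ⟨m + 1, hk⟩ := rfl
      rw [hcast, hsucc, ih (by omega)] at h1
      exact inv_injective (mul_left_cancel h1)
  refine Prod.ext rfl (funext fun m => ?_)
  show c1 m = c2 m
  have hmd : (m : ℕ) < d - 1 := m.isLt
  have hm1 : (m : ℕ) + 1 < d + 1 := by omega
  have e : ∀ c : Fin (d-1) → G, embC d c ⟨(m : ℕ) + 1, hm1⟩ = c m := by
    intro c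
    simp only [embC]
    rw [dif_pos ⟨Nat.succ_pos _, by omega⟩]
    exact congrArg c (Fin.ext (by simp))
  rw [← e c1, ← e c2, key]


lemma range_PhiC (d : ℕ) :
    {p : (Fin d → G × G) × (Fin d → G × G) |
      IsCuboctOn (fun x : Fin d → G => (List.ofFn x).prod) p.1 p.2}
      = Set.range (PhiC (G := G) d) := by
  ext p
  simp only [Set.mem_setOf_eq, Set.mem_range]
  constructor
  · intro h
    obtain ⟨A, B⟩ := p
    set La : List G := List.ofFn fun t => (A t).1 with hLa
    set Lb : List G := List.ofFn fun t => (B t).1 with hLb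
    have h0 : La.prod = Lb.prod := by
      have := h (fun _ => 0)
      simpa using this
    have hc0 : cdef d A B 0 = 1 := by simp [cdef]
    have hclast : cdef d A B (Fin.last d) = 1 := by
      simp only [cdef, Fin.val_last]
      rw [List.take_of_length_le (by simp), List.take_of_length_le (by simp)]
      rw [← hLa, ← hLb, h0]
      simp
    -- pointwise facts
    have hcs : ∀ i : Fin d, cdef d A B i.castSucc
        = ((Lb.take i).prod)⁻¹ * (La.take i).prod := by
      intro i; simp only [cdef, Fin.coe_castSucc]; rfl
    have hss : ∀ i : Fin d, cdef d A B i.succ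
        = ((Lb.take (i+1)).prod)⁻¹ * (La.take (i+1)).prod := by
      intro i; simp only [cdef, Fin.val_succ]; rfl
    have hTa' : ∀ i : Fin d, (La.take ((i:ℕ)+1)).prod = (La.take i).prod * (A i).1 := by
      intro i
      rw [List.prod_take_succ _ _ (by simp [hLa])]
      congr 1
      simp [hLa]
    have hTb' : ∀ i : Fin d, (Lb.take ((i:ℕ)+1)).prod = (Lb.take i).prod * (B i).1 := by
      intro i
      rw [List.prod_take_succ _ _ (by simp [hLb])]
      congr 1
      simp [hLb]
    have pw1 : ∀ i : Fin d,
        (B i).1 = cdef d A B i.castSucc * (A i).1 * (cdef d A B i.succ)⁻¹ := by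
      intro i
      rw [hcs, hss, hTa', hTb']
      group
    have pw2 : ∀ i : Fin d,
        (B i).2 = cdef d A B i.castSucc * (A i).2 * (cdef d A B i.succ)⁻¹ := by
      intro i
      have hi := h (fun k => if k = i then 1 else 0)
      simp only [] at hi
      have eA : (fun k => if (if k = i then (1 : Fin 2) else 0) = 0
            then (A k).1 else (A k).2)
          = Function.update (fun k => (A k).1) i (A i).2 := by
        funext k
        rcases eq_or_ne k i with rfl | hne
        · simp
        · simp [hne, Function.update_of_ne hne]
      have eB : (fun k => if (if k = i then (1 : Fin 2) else 0) = 0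
            then (B k).1 else (B k).2)
          = Function.update (fun k => (B k).1) i (B i).2 := by
        funext k
        rcases eq_or_ne k i with rfl | hne
        · simp
        · simp [hne, Function.update_of_ne hne]
      rw [eA, eB, prod_ofFn_update', prod_ofFn_update'] at hi
      rw [← hLa, ← hLb] at hi
      have hDa : (La.drop ((i:ℕ)+1)).prod = ((La.take ((i:ℕ)+1)).prod)⁻¹ * La.prod := by
        rw [← List.prod_take_mul_prod_drop La ((i:ℕ)+1)]
        group
      have hDb : (Lb.drop ((i:ℕ)+1)).prod = ((Lb.take ((i:ℕ)+1)).prod)⁻¹ * Lb.prod := by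
        rw [← List.prod_take_mul_prod_drop Lb ((i:ℕ)+1)]
        group
      rw [hDa, hDb, h0] at hi
      have h2 : (B i).2 = ((Lb.take (i:ℕ)).prod)⁻¹ *
          ((La.take (i:ℕ)).prod * (A i).2 * (((La.take ((i:ℕ)+1)).prod)⁻¹ * Lb.prod)) *
          (((Lb.take ((i:ℕ)+1)).prod)⁻¹ * Lb.prod)⁻¹ := by
        rw [hi]
        group
      rw [hcs, hss, h2]
      group
    refine ⟨(A, fun m => cdef d A B ⟨(m : ℕ) + 1, by omega⟩), ?_⟩
    have hembeq : embC d (fun m : Fin (d-1) => cdef d A B ⟨(m : ℕ) + 1, by omega⟩)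
        = cdef d A B := by
      funext k
      simp only [embC]
      split_ifs with hcond
      · exact congrArg (cdef d A B) (Fin.ext (by simp; omega))
      · have hk := k.isLt
        have : (k : ℕ) = 0 ∨ (k : ℕ) = d := by omega
        rcases this with h' | h'
        · rw [show k = 0 from Fin.ext h', hc0]
        · rw [show k = Fin.last d from Fin.ext h', hclast]
    refine Prod.ext rfl (funext fun i => ?_)
    show (_, _) = B i
    simp only [PhiC, hembeq]
    exact Prod.ext (pw1 i).symm (pw2 i).symm
  · rintro ⟨⟨A', c'⟩, rfl⟩
    intro j
    simp only [PhiC]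
    have e : (fun i => if j i = 0
          then (embC d c' i.castSucc * (A' i).1 * (embC d c' i.succ)⁻¹,
                embC d c' i.castSucc * (A' i).2 * (embC d c' i.succ)⁻¹).1
          else (embC d c' i.castSucc * (A' i).1 * (embC d c' i.succ)⁻¹,
                embC d c' i.castSucc * (A' i).2 * (embC d c' i.succ)⁻¹).2)
        = fun i => embC d c' i.castSucc *
            (if j i = 0 then (A' i).1 else (A' i).2) * (embC d c' i.succ)⁻¹ := by
      funext i
      by_cases hji : j i = 0 <;> simp [hji]
    rw [e, telescope', embC_zero, embC_last]
    simp

end Aux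

/-- For a finite group `G` with `n` elements and `d ≥ 2`, the ordered-product map
`x ↦ x 0 * x 1 * ⋯ * x (d-1)` is a `d`-dimensional latin hypercube on `G` with exactly
`n ^ (3d - 1)` cuboctahedra. -/
theorem iterated_group_cuboctCount (G : Type*) [Group G] [Fintype G]
    (n d : ℕ) (hG : Fintype.card G = n) (hd : 2 ≤ d) :
    IsLatinHypercubeOn (fun x : Fin d → G => (List.ofFn x).prod) ∧
    cuboctCountOn (fun x : Fin d → G => (List.ofFn x).prod) = n ^ (3 * d - 1) := by
  constructor
  · intro i x
    show Function.Bijective (fun v : G => (List.ofFn (Function.update x i v)).prod)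
    have e : (fun v : G => (List.ofFn (Function.update x i v)).prod)
        = fun v => ((List.ofFn x).take i).prod * v *
            ((List.ofFn x).drop ((i : ℕ) + 1)).prod :=
      funext fun v => prod_ofFn_update' x i v
    rw [e]
    constructor
    · intro a b hab
      exact mul_left_cancel (mul_right_cancel hab)
    · intro y
      exact ⟨(((List.ofFn x).take i).prod)⁻¹ * y *
        (((List.ofFn x).drop ((i : ℕ) + 1)).prod)⁻¹, by group⟩
  · rw [cuboctCountOn, range_PhiC (G := G) d, ← Nat.card_coe_set_eq,
      Nat.card_range_of_injective (PhiC_injective d), Nat.card_eq_fintype_card]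
    rw [Fintype.card_prod, Fintype.card_fun, Fintype.card_fun, Fintype.card_prod,
      Fintype.card_fin, Fintype.card_fin, hG]
    rw [show n * n = n ^ 2 from (sq n).symm, ← pow_mul, ← pow_add]
    congr 1
    omega
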